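/- arXiv:2512.22907 — 2 statements merged into one kernel-verified Lean document; each statement's English description precedes it below -/
import Mathlib

section
/- Let X₁, …, X_{2d} ⊆ S^{d-1} with pos X_i = ℝ^d for every i, and suppose no partial transversal T = {x_i ∈ X_i : i ∈ I} with I ⊊ [2d] satisfies pos T = ℝ^d. Then for every i ∈ [2d] and every x ∈ X_i, the set {j ∈ [2d] : j ≠ i and −x ∈ X_j} has at least d elements. -/
open scoped BigOperators

open Submodule Module Metric

abbrev R0 : Type := {c : ℝ // 0 ≤ c}

variable {E : Type*} [NormedAddCommGroup E] [InnerProductSpace ℝ E]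




/-- If every element of `S` has both `s` and `-s` in the `R0`-submodule `C`,
then the real span of `S` is inside `C`. -/
lemma span_le_of_neg (C : Submodule R0 E) (S : Set E)
    (h : ∀ s ∈ S, s ∈ C ∧ -s ∈ C) : (span ℝ S : Set E) ⊆ (C : Set E) := by
  let M : Submodule ℝ E :=
  { carrier := {v | v ∈ C ∧ -v ∈ C}
    add_mem' := by
      rintro a b ⟨ha1, ha2⟩ ⟨hb1, hb2⟩
      exact ⟨C.add_mem ha1 hb1, by rw [neg_add]; exact C.add_mem ha2 hb2⟩
    zero_mem' := by simp [C.zero_mem]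
    smul_mem' := by
      rintro r v ⟨hv1, hv2⟩
      rcases le_or_gt 0 r with hr | hr
      · refine ⟨C.smul_mem ⟨r, hr⟩ hv1, ?_⟩
        have : -(r • v) = r • (-v) := by rw [smul_neg]
        rw [this]
        exact C.smul_mem ⟨r, hr⟩ hv2
      · have h1 : r • v = (-r) • (-v) := by rw [neg_smul, smul_neg, neg_neg]
        have h2 : -(r • v) = (-r) • v := by rw [neg_smul]
        constructor
        · rw [h1]; exact C.smul_mem ⟨-r, by linarith⟩ hv2
        · rw [h2]; exact C.smul_mem ⟨-r, by linarith⟩ hv1 }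
  have hSM : S ⊆ (M : Set E) := fun s hs => h s hs
  have : span ℝ S ≤ M := span_le.mpr hSM
  exact fun v hv => ((this hv).1 : v ∈ C)

/-- From a spanning set, find an element with positive inner product with any nonzero `u`. -/
lemma exists_pos_inner {A : Set E} (hA : span R0 A = ⊤) {u : E} (hu : u ≠ 0) :
    ∃ a ∈ A, 0 < (inner ℝ u a : ℝ) := by
  have hmem : u ∈ span R0 A := by rw [hA]; trivial
  rw [mem_span_set] at hmem
  obtain ⟨c, hsupp, hsum⟩ := hmem
  have hpos : (0:ℝ) < inner ℝ u u := by
    rw [real_inner_self_eq_norm_mul_norm]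
    have : 0 < ‖u‖ := norm_pos_iff.mpr hu
    positivity
  have h0 : (inner ℝ u (c.sum fun mi r => r • mi) : ℝ)
      = ∑ a ∈ c.support, ((c a : ℝ)) * (inner ℝ u a : ℝ) := by
    rw [Finsupp.sum, inner_sum]
    refine Finset.sum_congr rfl ?_
    intro a _
    have hra : (c a) • a = ((c a : ℝ)) • a := rfl
    rw [hra, real_inner_smul_right]
  have hexp : (inner ℝ u u : ℝ) = ∑ a ∈ c.support, ((c a : ℝ)) * (inner ℝ u a : ℝ) := by
    rw [← h0, hsum]
  by_contra hcon
  push_neg at hcon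
  have : ∀ a ∈ c.support, ((c a : ℝ)) * (inner ℝ u a : ℝ) ≤ 0 := by
    intro a ha
    have h1 : (0:ℝ) ≤ (c a : ℝ) := (c a).2
    have h2 : (inner ℝ u a : ℝ) ≤ 0 := hcon a (hsupp ha)
    exact mul_nonpos_of_nonneg_of_nonpos h1 h2
  have : (inner ℝ u u : ℝ) ≤ 0 := hexp ▸ Finset.sum_nonpos this
  linarith

lemma spanR_of_spanR0 {A : Set E} (hA : span R0 A = ⊤) : span ℝ A = ⊤ := by
  rw [eq_top_iff]
  intro v _
  have hv : v ∈ span R0 A := by rw [hA]; trivial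
  refine Submodule.span_induction (p := fun x _ => x ∈ span ℝ A) ?_ ?_ ?_ ?_ hv
  · exact fun x hx => subset_span hx
  · exact zero_mem _
  · exact fun x y _ _ hx hy => add_mem hx hy
  · intro c x _ hx
    have : c • x = (c : ℝ) • x := rfl
    rw [this]
    exact smul_mem _ _ hx

lemma exists_finset_span [FiniteDimensional ℝ E] {A : Set E} (hA : span R0 A = ⊤) :
    ∃ F : Finset E, ↑F ⊆ A ∧ span R0 (↑F : Set E) = ⊤ := by
  classical
  set n := finrank ℝ E
  let b := finBasis ℝ E
  have hmem : ∀ (k : Fin n) (s : Bool), ∃ c : E →₀ R0, ↑c.support ⊆ A ∧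
      (c.sum fun mi r => r • mi) = (if s then b k else -(b k)) := by
    intro k s
    apply mem_span_set.mp
    rw [hA]; trivial
  choose c hcsupp hcsum using hmem
  let F : Finset E := Finset.univ.biUnion (fun k : Fin n => (c k true).support ∪ (c k false).support)
  refine ⟨F, ?_, ?_⟩
  · intro a ha
    simp only [F, Finset.coe_biUnion, Set.mem_iUnion, Finset.coe_union, Set.mem_union] at ha
    obtain ⟨k, _, h | h⟩ := ha
    · exact hcsupp k true h
    · exact hcsupp k false h
  · rw [eq_top_iff]
    intro v _
    have hb : ∀ k : Fin n, b k ∈ span R0 (↑F : Set E) ∧ -(b k) ∈ span R0 (↑F : Set E) := by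
      intro k
      constructor
      · refine mem_span_set.mpr ⟨c k true, ?_, by simpa using hcsum k true⟩
        intro a ha
        simp only [F, Finset.coe_biUnion, Set.mem_iUnion, Finset.coe_union, Set.mem_union]
        exact ⟨k, Finset.mem_univ k, Or.inl ha⟩
      · refine mem_span_set.mpr ⟨c k false, ?_, by simpa using hcsum k false⟩
        intro a ha
        simp only [F, Finset.coe_biUnion, Set.mem_iUnion, Finset.coe_union, Set.mem_union]
        exact ⟨k, Finset.mem_univ k, Or.inr ha⟩
    have hsub : (span ℝ (Set.range b) : Set E) ⊆ (span R0 (↑F : Set E) : Set E) := by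
      apply span_le_of_neg
      rintro s ⟨k, rfl⟩
      exact hb k
    have : v ∈ span ℝ (Set.range b) := by rw [b.span_eq]; trivial
    exact hsub this




/-- Reduce a nonnegative combination to one with linearly independent support. -/
lemma reduce_indep {ι : Type*} [DecidableEq ι] (z : ι → E) (Q : Finset ι) :
    ∀ (n : ℕ) (c : ι → ℝ), (Q.filter (fun j => c j ≠ 0)).card ≤ n → (∀ j, 0 ≤ c j) →
    ∃ c' : ι → ℝ, (∀ j, 0 ≤ c' j) ∧ (∑ j ∈ Q, c' j • z j = ∑ j ∈ Q, c j • z j) ∧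
      (∀ j, c' j ≠ 0 → c j ≠ 0) ∧
      LinearIndependent ℝ (fun j : {j // j ∈ Q.filter (fun j => c' j ≠ 0)} => z j.1) := by
  intro n
  induction n with
  | zero =>
    intro c hcard hc
    refine ⟨c, hc, rfl, fun j h => h, ?_⟩
    have hempty : Q.filter (fun j => c j ≠ 0) = ∅ := Finset.card_eq_zero.mp (Nat.le_zero.mp hcard)
    rw [hempty]
    have : IsEmpty {j // j ∈ (∅ : Finset ι)} := by
      constructor; rintro ⟨j, hj⟩; exact absurd hj (Finset.notMem_empty j)
    exact linearIndependent_empty_type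
  | succ n ih =>
    intro c hcard hc
    by_cases hind : LinearIndependent ℝ (fun j : {j // j ∈ Q.filter (fun j => c j ≠ 0)} => z j.1)
    · exact ⟨c, hc, rfl, fun j h => h, hind⟩
    · -- get a dependency
      set Fc := Q.filter (fun j => c j ≠ 0) with hFc
      rw [Fintype.not_linearIndependent_iff] at hind
      obtain ⟨g, hgsum, i₀, hgi₀⟩ := hind
      -- extend g to ι
      set gh : ι → ℝ := fun j => if h : j ∈ Fc then g ⟨j, h⟩ else 0 with hgh
      have hghsum : ∑ j ∈ Fc, gh j • z j = 0 := by
        rw [← Finset.sum_coe_sort Fc (fun j => gh j • z j)]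
        rw [← hgsum]
        refine Finset.sum_congr rfl ?_
        rintro ⟨j, hj⟩ _
        simp only [gh, dif_pos hj]
      have hghout : ∀ j, j ∉ Fc → gh j = 0 := by
        intro j hj; simp only [gh, dif_neg hj]
      have hghne : gh i₀.1 ≠ 0 := by
        simp only [gh, dif_pos i₀.2]
        convert hgi₀ using 2
      -- normalize sign: get h with some positive value
      obtain ⟨h, hhsum, hhout, j₁, hj₁mem, hj₁pos⟩ :
          ∃ h : ι → ℝ, (∑ j ∈ Fc, h j • z j = 0) ∧ (∀ j, j ∉ Fc → h j = 0) ∧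
            ∃ j₁ ∈ Fc, 0 < h j₁ := by
        rcases lt_or_gt_of_ne hghne with hlt | hgt
        · refine ⟨fun j => -(gh j), ?_, ?_, i₀.1, i₀.2, by simpa using hlt⟩
          · simp only [neg_smul, Finset.sum_neg_distrib, hghsum, neg_zero]
          · intro j hj; show -gh j = 0; rw [hghout j hj, neg_zero]
        · exact ⟨gh, hghsum, hghout, i₀.1, i₀.2, hgt⟩
      -- minimize ratio over positive h
      set P := Fc.filter (fun j => 0 < h j) with hP
      have hPne : P.Nonempty := ⟨j₁, Finset.mem_filter.mpr ⟨hj₁mem, hj₁pos⟩⟩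
      obtain ⟨j₀, hj₀P, hj₀min⟩ := Finset.exists_min_image P (fun j => c j / h j) hPne
      have hj₀Fc : j₀ ∈ Fc := (Finset.mem_filter.mp hj₀P).1
      have hj₀pos : 0 < h j₀ := (Finset.mem_filter.mp hj₀P).2
      set τ := c j₀ / h j₀ with hτ
      have hτnn : 0 ≤ τ := div_nonneg (hc j₀) (le_of_lt hj₀pos)
      set c' := fun j => c j - τ * h j with hc'
      have hc'nn : ∀ j, 0 ≤ c' j := by
        intro j
        by_cases hjP : j ∈ P
        · have hjpos : 0 < h j := (Finset.mem_filter.mp hjP).2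
          have := hj₀min j hjP
          simp only [c']
          rw [sub_nonneg]
          calc τ * h j ≤ (c j / h j) * h j := by
                apply mul_le_mul_of_nonneg_right this (le_of_lt hjpos)
            _ = c j := by field_simp
        · have hhj : h j ≤ 0 := by
            by_cases hjFc : j ∈ Fc
            · have hnlt : ¬ 0 < h j := fun hpos => hjP (Finset.mem_filter.mpr ⟨hjFc, hpos⟩)
              exact le_of_not_gt hnlt
            · exact le_of_eq (hhout j hjFc)
          simp only [c']
          have : τ * h j ≤ 0 := mul_nonpos_of_nonneg_of_nonpos hτnn hhj
          linarith [hc j]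
      have hsum' : ∑ j ∈ Q, c' j • z j = ∑ j ∈ Q, c j • z j := by
        have hQh : ∑ j ∈ Q, h j • z j = ∑ j ∈ Fc, h j • z j := by
          symm
          apply Finset.sum_subset (Finset.filter_subset _ _)
          intro j hjQ hjFc
          rw [hhout j hjFc, zero_smul]
        have : ∑ j ∈ Q, c' j • z j = ∑ j ∈ Q, c j • z j - τ • ∑ j ∈ Q, h j • z j := by
          rw [Finset.smul_sum, ← Finset.sum_sub_distrib]
          refine Finset.sum_congr rfl ?_
          intro j _
          simp only [c']
          rw [sub_smul, smul_smul]
        rw [this, hQh, hhsum, smul_zero, sub_zero]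
      have hsupp : ∀ j, c' j ≠ 0 → c j ≠ 0 := by
        intro j hj hcj
        apply hj
        have : j ∉ Fc := by simp [Fc, Finset.mem_filter, hcj]
        simp only [c', hhout j this, hcj, mul_zero, sub_zero]
      have hc'j₀ : c' j₀ = 0 := by
        simp only [c', τ]
        field_simp
        ring
      have hss : Q.filter (fun j => c' j ≠ 0) ⊆ Fc.erase j₀ := by
        intro j hj
        obtain ⟨hjQ, hjne⟩ := Finset.mem_filter.mp hj
        refine Finset.mem_erase.mpr ⟨?_, Finset.mem_filter.mpr ⟨hjQ, hsupp j hjne⟩⟩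
        intro heq
        exact hjne (heq ▸ hc'j₀)
      have hcard' : (Q.filter (fun j => c' j ≠ 0)).card ≤ n := by
        calc (Q.filter (fun j => c' j ≠ 0)).card ≤ (Fc.erase j₀).card := Finset.card_le_card hss
          _ = Fc.card - 1 := Finset.card_erase_of_mem hj₀Fc
          _ ≤ n := by omega
      obtain ⟨c'', h1, h2, h3, h4⟩ := ih c' hcard' hc'nn
      exact ⟨c'', h1, by rw [h2, hsum'], fun j hj => hsupp j (h3 j hj), h4⟩




/-- The cone of nonnegative combinations of `z j`, `j ∈ S`. -/
def coneOf {ι : Type*} (z : ι → E) (S : Finset ι) : Set E :=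
  {x | ∃ c : ι → ℝ, (∀ j ∈ S, 0 ≤ c j) ∧ x = ∑ j ∈ S, c j • z j}

lemma zero_mem_coneOf {ι : Type*} (z : ι → E) (S : Finset ι) : (0:E) ∈ coneOf z S :=
  ⟨fun _ => 0, fun _ _ => le_refl 0, by simp⟩

lemma convex_coneOf {ι : Type*} (z : ι → E) (S : Finset ι) : Convex ℝ (coneOf z S) := by
  rintro x ⟨c, hc, rfl⟩ y ⟨c', hc', rfl⟩ a b ha hb _
  refine ⟨fun j => a * c j + b * c' j, ?_, ?_⟩
  · intro j hj
    have := hc j hj; have := hc' j hj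
    positivity
  · rw [Finset.smul_sum, Finset.smul_sum, ← Finset.sum_add_distrib]
    refine Finset.sum_congr rfl ?_
    intro j _
    rw [add_smul, smul_smul, smul_smul]

lemma isClosed_coneOf_indep [FiniteDimensional ℝ E] {ι : Type*} (z : ι → E) (T : Finset ι)
    (hind : LinearIndependent ℝ (fun j : {j // j ∈ T} => z j.1)) :
    IsClosed (coneOf z T) := by
  classical
  set f : ({j // j ∈ T} → ℝ) →ₗ[ℝ] E :=
    (Fintype.linearCombination ℝ (fun j : {j // j ∈ T} => z j.1)) with hf
  have happ : ∀ g : {j // j ∈ T} → ℝ, f g = ∑ j : {j // j ∈ T}, g j • z j.1 := by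
    intro g
    rw [hf, Fintype.linearCombination_apply]
  have hker : LinearMap.ker f = ⊥ := by
    rw [LinearMap.ker_eq_bot']
    intro g hg
    have hsum : ∑ j : {j // j ∈ T}, g j • z j.1 = 0 := by rw [← happ g]; exact hg
    funext j
    exact Fintype.linearIndependent_iff.mp hind g hsum j
  have hemb := LinearMap.isClosedEmbedding_of_injective (𝕜 := ℝ) hker
  have heq : coneOf z T = f '' {g : {j // j ∈ T} → ℝ | ∀ j, 0 ≤ g j} := by
    ext x
    constructor
    · rintro ⟨c, hc, rfl⟩
      refine ⟨fun j => c j.1, fun j => hc j.1 j.2, ?_⟩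
      rw [happ]
      exact Finset.sum_coe_sort T (fun j => c j • z j)
    · rintro ⟨g, hg, rfl⟩
      refine ⟨fun j => if h : j ∈ T then g ⟨j, h⟩ else 0, ?_, ?_⟩
      · intro j hj; simp only [dif_pos hj]; exact hg _
      · rw [happ, ← Finset.sum_coe_sort T]
        refine Finset.sum_congr rfl ?_
        rintro ⟨j, hj⟩ _
        simp only [dif_pos hj]
  rw [heq]
  apply hemb.isClosedMap
  have : {g : {j // j ∈ T} → ℝ | ∀ j, 0 ≤ g j} = ⋂ j, {g : {j // j ∈ T} → ℝ | 0 ≤ g j} := by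
    ext g; simp
  rw [this]
  exact isClosed_iInter (fun j => isClosed_le continuous_const (continuous_apply j))

lemma inner_nonpos_of_min {K : Set E} (hK : Convex ℝ K) {v p : E} (hp : p ∈ K)
    (hmin : ∀ w ∈ K, dist v p ≤ dist v w) {w : E} (hw : w ∈ K) :
    (inner ℝ (v - p) (w - p) : ℝ) ≤ 0 := by
  by_contra hcon
  push_neg at hcon
  set ip : ℝ := inner ℝ (v - p) (w - p) with hip
  have hwp : w - p ≠ 0 := by
    intro h0
    rw [hip, h0, inner_zero_right] at hcon
    exact lt_irrefl 0 hcon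
  have hnsq : (0:ℝ) < ‖w - p‖ ^ 2 := pow_pos (norm_pos_iff.mpr hwp) 2
  set t : ℝ := min 1 (ip / ‖w - p‖ ^ 2) with ht
  have htpos : 0 < t := lt_min one_pos (div_pos hcon hnsq)
  have htle1 : t ≤ 1 := min_le_left _ _
  have htle : t * ‖w - p‖ ^ 2 ≤ ip := by
    calc t * ‖w - p‖ ^ 2 ≤ (ip / ‖w - p‖ ^ 2) * ‖w - p‖ ^ 2 :=
          mul_le_mul_of_nonneg_right (min_le_right _ _) (le_of_lt hnsq)
      _ = ip := by field_simp
  set w' := p + t • (w - p) with hw'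
  have hw'K : w' ∈ K := by
    have : w' = (1 - t) • p + t • w := by
      rw [hw']; module
    rw [this]
    exact hK hp hw (by linarith) (le_of_lt htpos) (by ring)
  have hdist : dist v w' < dist v p := by
    have h1 : v - w' = (v - p) - t • (w - p) := by rw [hw']; module
    have h2 : ‖v - w'‖ ^ 2 = ‖v - p‖ ^ 2 - 2 * (t * ip) + t ^ 2 * ‖w - p‖ ^ 2 := by
      rw [h1, norm_sub_sq_real, real_inner_smul_right, norm_smul]
      rw [Real.norm_eq_abs, mul_pow, sq_abs]
    have h3 : ‖v - w'‖ ^ 2 < ‖v - p‖ ^ 2 := by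
      rw [h2]
      have ht2 : t ^ 2 * ‖w - p‖ ^ 2 ≤ t * ip := by
        calc t ^ 2 * ‖w - p‖ ^ 2 = t * (t * ‖w - p‖ ^ 2) := by ring
          _ ≤ t * ip := mul_le_mul_of_nonneg_left htle (le_of_lt htpos)
      nlinarith
    rw [dist_eq_norm, dist_eq_norm]
    nlinarith [norm_nonneg (v - w'), norm_nonneg (v - p)]
  exact absurd (hmin w' hw'K) (not_le.mpr hdist)
section CCC

variable {ι : Type*} [DecidableEq ι] [FiniteDimensional ℝ E]

omit [FiniteDimensional ℝ E] in
lemma linearIndependent_finset_empty_family {κ : Type*} (f : κ → E) :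
    LinearIndependent ℝ (fun p : {p // p ∈ (∅ : Finset κ)} => f p.1) := by
  have : IsEmpty {p // p ∈ (∅ : Finset κ)} :=
    ⟨fun p => absurd p.2 (Finset.notMem_empty _)⟩
  exact linearIndependent_empty_type

/-- Conic colorful Carathéodory: with at least `finrank` many classes, each positively
spanning, any vector is a positive combination of a linearly independent partial transversal. -/
lemma colorful (Q : Finset ι) (A : ι → Finset E) (hcard : finrank ℝ E ≤ Q.card)
    (hA : ∀ j ∈ Q, span R0 ((A j : Set E)) = ⊤) (v : E) :
    ∃ (S : Finset ι) (z : ι → E) (c : ι → ℝ), S ⊆ Q ∧ (∀ j ∈ S, z j ∈ A j) ∧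
      (∀ j ∈ S, 0 < c j) ∧ v = ∑ j ∈ S, c j • z j ∧
      LinearIndependent ℝ (fun j : {j // j ∈ S} => z j.1) := by
  classical
  set n := finrank ℝ E with hn
  set G : Finset (ι × E) := Q.biUnion (fun j => (A j).image (fun a => (j, a))) with hG
  have hGmem : ∀ p : ι × E, p ∈ G → p.1 ∈ Q ∧ p.2 ∈ A p.1 := by
    intro p hp
    simp only [hG, Finset.mem_biUnion, Finset.mem_image] at hp
    obtain ⟨j, hjQ, a, haA, rfl⟩ := hp
    exact ⟨hjQ, haA⟩
  have hGmem' : ∀ j a, j ∈ Q → a ∈ A j → (j, a) ∈ G := by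
    intro j a hj ha
    simp only [hG, Finset.mem_biUnion, Finset.mem_image]
    exact ⟨j, hj, a, ha, rfl⟩
  set PC : Finset (Finset (ι × E)) :=
    G.powerset.filter (fun P => Set.InjOn Prod.fst (P : Set (ι × E)) ∧
      LinearIndependent ℝ (fun p : {p // p ∈ P} => p.1.2)) with hPC
  set W : Set E := ⋃ P ∈ PC, coneOf (Prod.snd : ι × E → E) P with hW
  have hWmem : ∀ P ∈ PC, coneOf (Prod.snd : ι × E → E) P ⊆ W := by
    intro P hP x hx
    rw [hW]
    exact Set.mem_biUnion hP hx
  have hWclosed : IsClosed W := by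
    rw [hW]
    apply Set.Finite.isClosed_biUnion (Finset.finite_toSet PC)
    intro P hP
    have hP' : P ∈ PC := hP
    rw [hPC, Finset.mem_filter] at hP'
    exact isClosed_coneOf_indep _ P hP'.2.2
  have hemptyPC : (∅ : Finset (ι × E)) ∈ PC := by
    rw [hPC, Finset.mem_filter]
    refine ⟨Finset.mem_powerset.mpr (Finset.empty_subset G), ?_, ?_⟩
    · simp
    · exact linearIndependent_finset_empty_family _
  have hWne : W.Nonempty := ⟨0, hWmem ∅ hemptyPC (zero_mem_coneOf _ _)⟩
  have cone_sub_W : ∀ P : Finset (ι × E), P ⊆ G → Set.InjOn Prod.fst (P : Set (ι × E)) →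
      coneOf (Prod.snd : ι × E → E) P ⊆ W := by
    rintro P hPG hPinj x ⟨c, hc, rfl⟩
    set ct : ι × E → ℝ := fun p => if p ∈ P then c p else 0 with hct
    have hctnn : ∀ p, 0 ≤ ct p := by
      intro p
      simp only [hct]
      split_ifs with h
      · exact hc p h
      · exact le_rfl
    have hcteq : ∑ p ∈ P, ct p • p.2 = ∑ p ∈ P, c p • p.2 := by
      refine Finset.sum_congr rfl ?_
      intro p hp
      simp only [hct, if_pos hp]
    obtain ⟨c', hc'nn, hc'sum, hc'supp, hc'ind⟩ :=
      reduce_indep (Prod.snd : ι × E → E) P P.card ct (Finset.card_filter_le _ _) hctnn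
    set N := P.filter (fun p => c' p ≠ 0) with hNd
    have hNsub : N ⊆ P := Finset.filter_subset _ _
    have hNPC : N ∈ PC := by
      rw [hPC, Finset.mem_filter]
      refine ⟨Finset.mem_powerset.mpr (hNsub.trans hPG), ?_, hc'ind⟩
      exact hPinj.mono (by exact_mod_cast Finset.coe_subset.mpr hNsub)
    apply hWmem N hNPC
    refine ⟨c', fun p _ => hc'nn p, ?_⟩
    rw [hNd]
    rw [Finset.sum_filter_of_ne (by intro p _ hne hzero; exact hne (by rw [hzero, zero_smul]))]
    rw [hc'sum, hcteq]
  obtain ⟨pstar, hpW, hdisteq⟩ := hWclosed.exists_infDist_eq_dist hWne v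
  have hmin : ∀ w ∈ W, dist v pstar ≤ dist v w := by
    intro w hw
    rw [← hdisteq]
    exact Metric.infDist_le_dist_of_mem hw
  obtain ⟨Pstar, hPstarPC, hpcone⟩ := Set.mem_iUnion₂.mp (by rw [hW] at hpW; exact hpW)
  have hPstar' := hPstarPC
  rw [hPC, Finset.mem_filter] at hPstar'
  have hPstarG : Pstar ⊆ G := Finset.mem_powerset.mp hPstar'.1
  have hPstarinj : Set.InjOn Prod.fst (Pstar : Set (ι × E)) := hPstar'.2.1
  have hPstarind : LinearIndependent ℝ (fun p : {p // p ∈ Pstar} => p.1.2) := hPstar'.2.2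
  obtain ⟨c, hcP, hpsum⟩ := hpcone
  have hpmem : pstar ∈ coneOf (Prod.snd : ι × E → E) Pstar := ⟨c, hcP, hpsum⟩
  by_cases hvp : v = pstar
  · -- success
    set ct : ι × E → ℝ := fun p => if p ∈ Pstar then c p else 0 with hct
    have hctnn : ∀ p, 0 ≤ ct p := by
      intro p
      simp only [hct]
      split_ifs with h
      · exact hcP p h
      · exact le_rfl
    set N := Pstar.filter (fun p => ct p ≠ 0) with hNd
    have hNsub : N ⊆ Pstar := Finset.filter_subset _ _
    have hNinj : Set.InjOn Prod.fst (N : Set (ι × E)) :=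
      hPstarinj.mono (by exact_mod_cast Finset.coe_subset.mpr hNsub)
    have hvN : v = ∑ p ∈ N, ct p • p.2 := by
      rw [hNd, Finset.sum_filter_of_ne
        (by intro p _ hne hzero; exact hne (by rw [hzero, zero_smul]))]
      rw [hvp, hpsum]
      refine Finset.sum_congr rfl ?_
      intro p hp
      simp only [hct, if_pos hp]
    have hindN : LinearIndependent ℝ (fun p : {p // p ∈ N} => p.1.2) := by
      refine hPstarind.comp (fun p : {p // p ∈ N} => (⟨p.1, hNsub p.2⟩ : {p // p ∈ Pstar})) ?_
      intro p q hpq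
      have h1 : p.1 = q.1 := congrArg (fun r : {p // p ∈ Pstar} => r.1) hpq
      exact Subtype.ext h1
    have huniq : ∀ p ∈ N, ∀ a : E, (p.1, a) ∈ N → a = p.2 := by
      intro p hp a ha
      have h1 : ((p.1, a) : ι × E) ∈ (N : Set (ι × E)) := ha
      have h2 : (p : ι × E) ∈ (N : Set (ι × E)) := hp
      have heq : ((p.1, a) : ι × E) = p := hNinj h1 h2 rfl
      exact congrArg Prod.snd heq
    set S := N.image Prod.fst with hS
    have hexN : ∀ j ∈ S, ∃ a : E, (j, a) ∈ N := by
      intro j hj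
      obtain ⟨p, hpN, hpj⟩ := Finset.mem_image.mp hj
      exact ⟨p.2, by rw [← hpj, Prod.mk.eta]; exact hpN⟩
    set z : ι → E := fun j => if h : ∃ a : E, (j, a) ∈ N then h.choose else 0 with hz
    set cz : ι → ℝ := fun j => if h : ∃ a : E, (j, a) ∈ N then ct (j, h.choose) else 0 with hcz
    have hzN : ∀ j ∈ S, (j, z j) ∈ N := by
      intro j hj
      have h := hexN j hj
      simp only [hz, dif_pos h]
      exact h.choose_spec
    have hpairz : ∀ p ∈ N, z p.1 = p.2 := by
      intro p hp
      have hjS : p.1 ∈ S := Finset.mem_image_of_mem _ hp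
      exact huniq p hp (z p.1) (hzN p.1 hjS)
    have hczp : ∀ p ∈ N, cz p.1 = ct p := by
      intro p hp
      have hex : ∃ a : E, (p.1, a) ∈ N := ⟨p.2, by rw [Prod.mk.eta]; exact hp⟩
      simp only [hcz, dif_pos hex]
      have : hex.choose = p.2 := huniq p hp _ hex.choose_spec
      rw [this, Prod.mk.eta]
    have hinj2 : ∀ x ∈ N, ∀ y ∈ N, x.1 = y.1 → x = y := by
      intro x hx y hy hxy
      exact hNinj (by exact_mod_cast hx) (by exact_mod_cast hy) hxy
    refine ⟨S, z, cz, ?_, ?_, ?_, ?_, ?_⟩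
    · intro j hj
      obtain ⟨p, hpN, hpj⟩ := Finset.mem_image.mp hj
      rw [← hpj]
      exact (hGmem p (hPstarG (hNsub hpN))).1
    · intro j hj
      exact (hGmem _ (hPstarG (hNsub (hzN j hj)))).2
    · intro j hj
      have h := hzN j hj
      have hne : ct (j, z j) ≠ 0 := (Finset.mem_filter.mp h).2
      have hnn : 0 ≤ ct (j, z j) := hctnn _
      have heq : cz j = ct (j, z j) := hczp (j, z j) h
      rw [heq]
      exact lt_of_le_of_ne hnn (Ne.symm hne)
    · rw [hvN, hS, Finset.sum_image hinj2]
      refine Finset.sum_congr rfl ?_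
      intro p hp
      rw [hczp p hp, hpairz p hp]
    · have einj : Function.Injective
          (fun j : {j // j ∈ S} => (⟨(j.1, z j.1), hzN j.1 j.2⟩ : {p // p ∈ N})) := by
        intro a b hab
        have h1 : a.1 = b.1 := congrArg (fun p : {p // p ∈ N} => (p.1).1) hab
        exact Subtype.ext h1
      exact hindN.comp _ einj
  · -- contradiction
    exfalso
    have hu : v - pstar ≠ 0 := sub_ne_zero.mpr hvp
    set u := v - pstar with hudef
    have hminP : ∀ w ∈ coneOf (Prod.snd : ι × E → E) Pstar, dist v pstar ≤ dist v w :=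
      fun w hw => hmin w (hWmem Pstar hPstarPC hw)
    have hvar : ∀ w ∈ coneOf (Prod.snd : ι × E → E) Pstar, (inner ℝ u (w - pstar) : ℝ) ≤ 0 :=
      fun w hw => inner_nonpos_of_min (convex_coneOf _ _) hpmem hminP hw
    have hzero : (0:E) ∈ coneOf (Prod.snd : ι × E → E) Pstar := zero_mem_coneOf _ _
    have hdbl : pstar + pstar ∈ coneOf (Prod.snd : ι × E → E) Pstar := by
      refine ⟨fun p => c p + c p, ?_, ?_⟩
      · intro p hp
        show (0:ℝ) ≤ c p + c p
        linarith [hcP p hp]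
      · show pstar + pstar = ∑ p ∈ Pstar, (c p + c p) • p.2
        have h3 : ∀ p : ι × E, (c p + c p) • p.2 = c p • p.2 + c p • p.2 := fun p => add_smul _ _ _
        rw [Finset.sum_congr rfl (fun p _ => h3 p), Finset.sum_add_distrib, ← hpsum]
    have hip0 : (inner ℝ u pstar : ℝ) = 0 := by
      have h1 := hvar 0 hzero
      have h2 := hvar (pstar + pstar) hdbl
      rw [zero_sub, inner_neg_right] at h1
      rw [add_sub_cancel_right] at h2
      linarith
    have hgen : ∀ p ∈ Pstar, (inner ℝ u p.2 : ℝ) ≤ 0 := by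
      intro p hp
      have hw : pstar + p.2 ∈ coneOf (Prod.snd : ι × E → E) Pstar := by
        refine ⟨fun q => c q + (if q = p then 1 else 0), ?_, ?_⟩
        · intro q hq
          show (0:ℝ) ≤ c q + (if q = p then 1 else 0)
          have := hcP q hq
          split_ifs <;> linarith
        · show pstar + p.2 = ∑ q ∈ Pstar, (c q + (if q = p then (1:ℝ) else 0)) • q.2
          have h3 : ∀ q : ι × E, (c q + (if q = p then (1:ℝ) else 0)) • q.2
              = c q • q.2 + (if q = p then (1:ℝ) else 0) • q.2 := fun q => add_smul _ _ _
          rw [Finset.sum_congr rfl (fun q _ => h3 q), Finset.sum_add_distrib]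
          have h4 : ∀ q : ι × E, ((if q = p then (1:ℝ) else 0) • q.2)
              = (if q = p then q.2 else 0) := by
            intro q; split_ifs <;> simp
          rw [Finset.sum_congr rfl (fun q _ => h4 q), Finset.sum_ite_eq' Pstar p (fun q => q.2),
            if_pos hp, ← hpsum]
      have := hvar _ hw
      rwa [add_sub_cancel_left] at this
    have hsumip : ∑ p ∈ Pstar, c p * (inner ℝ u p.2 : ℝ) = 0 := by
      have hh : (inner ℝ u pstar : ℝ) = ∑ p ∈ Pstar, c p * (inner ℝ u p.2 : ℝ) := by
        rw [hpsum, inner_sum]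
        refine Finset.sum_congr rfl ?_
        intro p _
        rw [real_inner_smul_right]
      rw [← hh, hip0]
    have hcomp : ∀ p ∈ Pstar, c p ≠ 0 → (inner ℝ u p.2 : ℝ) = 0 := by
      intro p hp hcne
      have hterms : ∀ q ∈ Pstar, c q * (inner ℝ u q.2 : ℝ) ≤ 0 := fun q hq =>
        mul_nonpos_of_nonneg_of_nonpos (hcP q hq) (hgen q hq)
      have := (Finset.sum_eq_zero_iff_of_nonpos hterms).mp hsumip p hp
      rcases mul_eq_zero.mp this with h | h
      · exact absurd h hcne
      · exact h
    set ct : ι × E → ℝ := fun p => if p ∈ Pstar then c p else 0 with hct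
    have hctnn : ∀ p, 0 ≤ ct p := by
      intro p
      simp only [hct]
      split_ifs with h
      · exact hcP p h
      · exact le_rfl
    have hcteq : ∑ p ∈ Pstar, ct p • p.2 = pstar := by
      rw [hpsum]
      refine Finset.sum_congr rfl ?_
      intro p hp
      simp only [hct, if_pos hp]
    obtain ⟨c2, hc2nn, hc2sum, hc2supp, hc2ind⟩ :=
      reduce_indep (Prod.snd : ι × E → E) Pstar Pstar.card ct (Finset.card_filter_le _ _) hctnn
    set N := Pstar.filter (fun p => c2 p ≠ 0) with hNd
    have hNsub : N ⊆ Pstar := Finset.filter_subset _ _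
    have hNinj : Set.InjOn Prod.fst (N : Set (ι × E)) :=
      hPstarinj.mono (by exact_mod_cast Finset.coe_subset.mpr hNsub)
    have hNperp : ∀ p : ι × E, p ∈ N → p.2 ∈ (span ℝ ({u} : Set E))ᗮ := by
      intro p hp
      obtain ⟨hpP, hpne⟩ := Finset.mem_filter.mp hp
      have hctne : ct p ≠ 0 := hc2supp p hpne
      have hcne : c p ≠ 0 := by
        simp only [hct, if_pos hpP] at hctne
        exact hctne
      exact Submodule.mem_orthogonal_singleton_iff_inner_right.mpr (hcomp p hpP hcne)
    have hcardN : N.card + 1 ≤ n := by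
      have hfin1 : finrank ℝ (span ℝ ({u} : Set E)) = 1 := finrank_span_singleton hu
      have hfinsum := Submodule.finrank_add_finrank_orthogonal (K := span ℝ ({u} : Set E))
      have hfam : LinearIndependent ℝ
          (fun p : {p // p ∈ N} => (⟨p.1.2, hNperp p.1 p.2⟩ : ↥(span ℝ ({u} : Set E))ᗮ)) := by
        apply LinearIndependent.of_comp ((span ℝ ({u} : Set E))ᗮ).subtype
        exact hc2ind
      have hle := hfam.fintype_card_le_finrank
      rw [Fintype.card_coe] at hle
      omega
    have hfresh : ∃ k0 ∈ Q, k0 ∉ N.image Prod.fst := by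
      by_contra hcon
      push_neg at hcon
      have hsubQ : Q ⊆ N.image Prod.fst := fun j hj => hcon j hj
      have h1 := Finset.card_le_card hsubQ
      have h2 := Finset.card_image_le (s := N) (f := Prod.fst)
      omega
    obtain ⟨k0, hk0Q, hk0not⟩ := hfresh
    obtain ⟨a, haA, haip⟩ := exists_pos_inner (hA k0 hk0Q) hu
    have hpairG : (k0, a) ∈ G := hGmem' k0 a hk0Q haA
    have hpairnotN : ((k0, a) : ι × E) ∉ N := fun h => hk0not (Finset.mem_image_of_mem Prod.fst h)
    set P' : Finset (ι × E) := insert (k0, a) N with hP'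
    have hP'G : P' ⊆ G := by
      rw [hP']
      exact Finset.insert_subset hpairG (hNsub.trans hPstarG)
    have hP'inj : Set.InjOn Prod.fst (P' : Set (ι × E)) := by
      rw [hP', Finset.coe_insert]
      rintro p hp q hq heq
      rcases Set.mem_insert_iff.mp hp with rfl | hpN
      · rcases Set.mem_insert_iff.mp hq with rfl | hqN
        · rfl
        · exfalso
          apply hk0not
          have hq1 : q.1 = k0 := heq.symm
          rw [← hq1]
          exact Finset.mem_image_of_mem Prod.fst (by exact_mod_cast hqN)
      · rcases Set.mem_insert_iff.mp hq with rfl | hqN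
        · exfalso
          apply hk0not
          have hp1 : p.1 = k0 := heq
          rw [← hp1]
          exact Finset.mem_image_of_mem Prod.fst (by exact_mod_cast hpN)
        · exact hNinj hpN hqN heq
    have ha0 : a ≠ 0 := by
      rintro rfl
      rw [inner_zero_right] at haip
      exact lt_irrefl 0 haip
    set nsq : ℝ := ‖a‖^2 with hnsq
    have hnsqpos : 0 < nsq := by rw [hnsq]; exact pow_pos (norm_pos_iff.mpr ha0) 2
    set t : ℝ := (inner ℝ u a : ℝ) / nsq with htdef
    have htpos : 0 < t := div_pos haip hnsqpos
    have hNsum : ∑ p ∈ N, c2 p • p.2 = pstar := by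
      rw [hNd, Finset.sum_filter_of_ne
        (by intro p _ hne hzero; exact hne (by rw [hzero, zero_smul]))]
      rw [hc2sum, hcteq]
    have hqcone : pstar + t • a ∈ coneOf (Prod.snd : ι × E → E) P' := by
      refine ⟨fun p => (if p ∈ N then c2 p else 0) + (if p = ((k0, a) : ι × E) then t else 0),
        ?_, ?_⟩
      · intro p hp
        show (0:ℝ) ≤ (if p ∈ N then c2 p else 0) + (if p = ((k0, a) : ι × E) then t else 0)
        have h1 : (0:ℝ) ≤ (if p ∈ N then c2 p else 0) := by
          split_ifs with h
          · exact hc2nn p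
          · exact le_rfl
        have h2 : (0:ℝ) ≤ (if p = ((k0, a) : ι × E) then t else 0) := by
          split_ifs with h
          · exact le_of_lt htpos
          · exact le_rfl
        linarith
      · show pstar + t • a = ∑ p ∈ P',
            ((if p ∈ N then c2 p else 0) + (if p = ((k0, a) : ι × E) then t else 0)) • p.2
        rw [hP', Finset.sum_insert hpairnotN]
        have hterm : ((if ((k0, a) : ι × E) ∈ N then c2 (k0,a) else 0)
            + (if ((k0, a) : ι × E) = ((k0, a) : ι × E) then t else 0)) • (((k0, a) : ι × E)).2
            = t • a := by
          rw [if_neg hpairnotN, if_pos rfl, zero_add]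
        have hrest : ∑ p ∈ N, ((if p ∈ N then c2 p else 0)
            + (if p = ((k0, a) : ι × E) then t else 0)) • p.2 = ∑ p ∈ N, c2 p • p.2 := by
          refine Finset.sum_congr rfl ?_
          intro p hp
          rw [if_pos hp, if_neg (by rintro rfl; exact hpairnotN hp), add_zero]
        rw [hterm, hrest, hNsum]
        abel
    have hqW := cone_sub_W P' hP'G hP'inj hqcone
    have hlt : dist v (pstar + t • a) < dist v pstar := by
      have h1 : v - (pstar + t • a) = u - t • a := by rw [hudef]; module
      have hexp : ‖u - t • a‖^2 = ‖u‖^2 - 2*(t*(inner ℝ u a : ℝ)) + t^2 * nsq := by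
        rw [norm_sub_sq_real, real_inner_smul_right, norm_smul, Real.norm_eq_abs, mul_pow, sq_abs,
          hnsq]
      have hkey : ‖u - t • a‖^2 < ‖u‖^2 := by
        rw [hexp]
        have e1 : t * (inner ℝ u a : ℝ) = (inner ℝ u a : ℝ)^2 / nsq := by
          rw [htdef]; field_simp
        have e2 : t^2 * nsq = (inner ℝ u a : ℝ)^2 / nsq := by
          rw [htdef]; field_simp
        rw [e1, e2]
        have hpos : 0 < (inner ℝ u a : ℝ)^2 / nsq := div_pos (pow_pos haip 2) hnsqpos
        linarith
      rw [dist_eq_norm, dist_eq_norm, h1, ← hudef]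
      nlinarith [norm_nonneg (u - t • a), norm_nonneg u]
    exact absurd (hmin _ hqW) (not_le.mpr hlt)

end CCC
section RankGrow

variable [FiniteDimensional ℝ E]

lemma span_image_R0_top {F : Type*} [NormedAddCommGroup F] [InnerProductSpace ℝ F]
    (f : E →ₗ[ℝ] F) (hsurj : Function.Surjective f) {A : Set E} (hA : span R0 A = ⊤) :
    span R0 (f '' A) = ⊤ := by
  rw [eq_top_iff]
  intro v _
  obtain ⟨x, rfl⟩ := hsurj v
  have hx : x ∈ span R0 A := by rw [hA]; trivial
  refine Submodule.span_induction (p := fun y _ => f y ∈ span R0 (f '' A)) ?_ ?_ ?_ ?_ hx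
  · exact fun y hy => subset_span ⟨y, hy, rfl⟩
  · show f 0 ∈ span R0 (f '' A)
    rw [map_zero]; exact zero_mem _
  · intro a b _ _ ha hb
    show f (a + b) ∈ span R0 (f '' A)
    rw [map_add]; exact add_mem ha hb
  · intro r a _ ha
    show f (r • a) ∈ span R0 (f '' A)
    have h1 : r • a = (r : ℝ) • a := rfl
    rw [h1, map_smul]
    have h2 : (r : ℝ) • f a = r • f a := rfl
    rw [h2]
    exact smul_mem _ _ ha

lemma rank_grow {ι : Type*} [DecidableEq ι] (L : Submodule ℝ E) (S : Finset ι) (w : ι → E)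
    (hind : LinearIndependent ℝ
      (fun j : {j // j ∈ S} => (orthogonalProjection Lᗮ (w j.1) : ↥Lᗮ))) :
    finrank ℝ L + S.card ≤ finrank ℝ (L ⊔ span ℝ (w '' ↑S) : Submodule ℝ E) := by
  classical
  induction S using Finset.induction_on with
  | empty =>
    have h : (L ⊔ span ℝ (w '' ↑(∅ : Finset ι)) : Submodule ℝ E) = L := by simp
    rw [h]
    simp
  | @insert a S haS ih =>
    have hindS : LinearIndependent ℝ
        (fun j : {j // j ∈ S} => (orthogonalProjection Lᗮ (w j.1) : ↥Lᗮ)) := by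
      refine hind.comp (fun j : {j // j ∈ S} =>
        (⟨j.1, Finset.mem_insert_of_mem j.2⟩ : {j // j ∈ insert a S})) ?_
      intro p q hpq
      have h1 : p.1 = q.1 := congrArg (fun r : {j // j ∈ insert a S} => r.1) hpq
      exact Subtype.ext h1
    have hnotmem : (orthogonalProjection Lᗮ (w a) : ↥Lᗮ) ∉
        span ℝ ((fun j : ι => (orthogonalProjection Lᗮ (w j) : ↥Lᗮ)) '' ↑S) := by
      have hx0 : (⟨a, Finset.mem_insert_self a S⟩ : {j // j ∈ insert a S}) ∉
          {x : {j // j ∈ insert a S} | x.1 ∈ S} := haS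
      have h2 := hind.notMem_span_image (s := {x : {j // j ∈ insert a S} | x.1 ∈ S}) hx0
      have himg : (fun j : {j // j ∈ insert a S} => (orthogonalProjection Lᗮ (w j.1) : ↥Lᗮ)) ''
          {x : {j // j ∈ insert a S} | x.1 ∈ S}
          = (fun j : ι => (orthogonalProjection Lᗮ (w j) : ↥Lᗮ)) '' ↑S := by
        ext y
        constructor
        · rintro ⟨⟨j, hj⟩, hjS, rfl⟩
          exact ⟨j, hjS, rfl⟩
        · rintro ⟨j, hjS, rfl⟩
          exact ⟨⟨j, Finset.mem_insert_of_mem hjS⟩, hjS, rfl⟩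
      rw [himg] at h2
      exact h2
    set M : Submodule ℝ E := L ⊔ span ℝ (w '' ↑S) with hM
    have hwaM : w a ∉ M := by
      intro hmem
      set piL : E →ₗ[ℝ] ↥Lᗮ := (orthogonalProjection Lᗮ).toLinearMap with hpiL
      have hmapL : Submodule.map piL L = ⊥ := by
        rw [Submodule.eq_bot_iff]
        rintro _ ⟨x, hx, rfl⟩
        have hxperp : x ∈ Lᗮᗮ := by
          rw [Submodule.orthogonal_orthogonal]
          exact hx
        exact Submodule.orthogonalProjectionOnto_apply_of_mem_orthogonal hxperp
      have hmapM : Submodule.map piL M =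
          span ℝ ((fun j : ι => (orthogonalProjection Lᗮ (w j) : ↥Lᗮ)) '' ↑S) := by
        rw [hM, Submodule.map_sup, hmapL, bot_sup_eq, ← Submodule.span_image]
        rw [Set.image_image]
        rfl
      have : (orthogonalProjection Lᗮ (w a) : ↥Lᗮ) ∈
          span ℝ ((fun j : ι => (orthogonalProjection Lᗮ (w j) : ↥Lᗮ)) '' ↑S) := by
        rw [← hmapM]
        exact Submodule.mem_map_of_mem hmem
      exact hnotmem this
    have hlt : M < M ⊔ span ℝ {w a} := by
      refine lt_of_le_of_ne le_sup_left ?_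
      intro heq
      apply hwaM
      rw [heq]
      exact Submodule.mem_sup_right (Submodule.mem_span_singleton_self (w a))
    have hrk := Submodule.finrank_lt_finrank_of_lt hlt
    have hih := ih hindS
    have heqM : (L ⊔ span ℝ (w '' ↑(insert a S)) : Submodule ℝ E) = M ⊔ span ℝ {w a} := by
      rw [Finset.coe_insert, Set.image_insert_eq, Submodule.span_insert, hM]
      rw [sup_comm (span ℝ {w a}) (span ℝ (w '' ↑S)), ← sup_assoc]
    rw [heqM, Finset.card_insert_of_notMem haS]
    omega

end RankGrow
/-- The positive (conic) hull of a set: all finite nonnegative linear combinations. -/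
def posHull {d : ℕ} (A : Set (EuclideanSpace ℝ (Fin d))) : Set (EuclideanSpace ℝ (Fin d)) :=
  {x | ∃ (n : ℕ) (c : Fin n → ℝ) (f : Fin n → EuclideanSpace ℝ (Fin d)),
    (∀ i, 0 ≤ c i) ∧ (∀ i, f i ∈ A) ∧ x = ∑ i, c i • f i}

lemma posHull_eq_span {d : ℕ} (A : Set (EuclideanSpace ℝ (Fin d))) :
    posHull A = (span R0 A : Set (EuclideanSpace ℝ (Fin d))) := by
  ext x
  constructor
  · rintro ⟨n, c, f, hc, hf, rfl⟩
    apply Submodule.sum_mem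
    intro i _
    have h1 : c i • f i = (⟨c i, hc i⟩ : R0) • f i := rfl
    rw [h1]
    exact Submodule.smul_mem _ _ (Submodule.subset_span (hf i))
  · intro hx
    refine Submodule.span_induction (p := fun y _ => y ∈ posHull A) ?_ ?_ ?_ ?_ hx
    · intro a ha
      exact ⟨1, fun _ => 1, fun _ => a, fun _ => zero_le_one, fun _ => ha, by simp⟩
    · exact ⟨0, fun _ => 0, fun _ => 0, fun i => le_rfl, fun i => i.elim0, by simp⟩
    · rintro y1 y2 _ _ ⟨n1, c1, f1, hc1, hf1, rfl⟩ ⟨n2, c2, f2, hc2, hf2, rfl⟩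
      refine ⟨n1 + n2, Fin.append c1 c2, Fin.append f1 f2, ?_, ?_, ?_⟩
      · intro i
        refine Fin.addCases ?_ ?_ i
        · intro i1
          rw [Fin.append_left]
          exact hc1 i1
        · intro i2
          rw [Fin.append_right]
          exact hc2 i2
      · intro i
        refine Fin.addCases ?_ ?_ i
        · intro i1
          rw [Fin.append_left]
          exact hf1 i1
        · intro i2
          rw [Fin.append_right]
          exact hf2 i2
      · rw [Fin.sum_univ_add]
        congr 1
        · refine Finset.sum_congr rfl ?_
          intro i _
          rw [Fin.append_left, Fin.append_left]
        · refine Finset.sum_congr rfl ?_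
          intro i _
          rw [Fin.append_right, Fin.append_right]
    · rintro r y _ ⟨n, c, f, hc, hf, rfl⟩
      refine ⟨n, fun i => (r : ℝ) * c i, f, ?_, hf, ?_⟩
      · intro i
        exact mul_nonneg r.2 (hc i)
      · show (r : ℝ) • ∑ i, c i • f i = _
        rw [Finset.smul_sum]
        refine Finset.sum_congr rfl ?_
        intro i _
        rw [smul_smul]
theorem antipodal_lemma (d : ℕ) (X : Fin (2 * d) → Set (EuclideanSpace ℝ (Fin d)))
    (hXs : ∀ i, X i ⊆ Metric.sphere (0 : EuclideanSpace ℝ (Fin d)) 1)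
    (hX : ∀ i, posHull (X i) = Set.univ)
    (hno : ∀ I : Finset (Fin (2 * d)), I ≠ Finset.univ →
      ∀ x : Fin (2 * d) → EuclideanSpace ℝ (Fin d),
        (∀ i ∈ I, x i ∈ X i) → posHull (x '' ↑I) ≠ Set.univ) :
    ∀ i : Fin (2 * d), ∀ x ∈ X i,
      d ≤ {j : Fin (2 * d) | j ≠ i ∧ -x ∈ X j}.ncard := by
  classical
  intro i x hx
  by_contra hcon
  push_neg at hcon
  have hdim : finrank ℝ (EuclideanSpace ℝ (Fin d)) = d := finrank_euclideanSpace_fin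
  have hXspan : ∀ j, span R0 (X j) = ⊤ := by
    intro j
    apply Submodule.eq_top_iff'.mpr
    intro v
    have hv : v ∈ (span R0 (X j) : Set (EuclideanSpace ℝ (Fin d))) := by
      rw [← posHull_eq_span, hX j]
      trivial
    exact hv
  have hFex : ∀ j, ∃ F : Finset (EuclideanSpace ℝ (Fin d)),
      ↑F ⊆ X j ∧ span R0 (↑F : Set (EuclideanSpace ℝ (Fin d))) = ⊤ :=
    fun j => exists_finset_span (hXspan j)
  choose F hFsub hFspan using hFex
  set B : Finset (Fin (2*d)) := Finset.univ.filter (fun j => j ≠ i ∧ -x ∈ X j) with hB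
  have hBeq : {j : Fin (2*d) | j ≠ i ∧ -x ∈ X j} = ↑B := by
    ext j; simp [hB]
  have hBcard : B.card < d := by
    rw [hBeq, Set.ncard_coe_finset] at hcon
    exact hcon
  set J : Finset (Fin (2*d)) := Finset.univ.filter (fun j => j ≠ i ∧ -x ∉ X j) with hJ
  have hcard2d : Fintype.card (Fin (2*d)) = 2*d := Fintype.card_fin _
  have hJB : J.card + B.card + 1 = 2*d := by
    have hdisj : Disjoint J B := by
      rw [Finset.disjoint_left]
      intro j hjJ hjB
      exact (Finset.mem_filter.mp hjJ).2.2 (Finset.mem_filter.mp hjB).2.2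
    have hunion : J ∪ B = Finset.univ.filter (fun j => j ≠ i) := by
      ext j
      simp only [hJ, hB, Finset.mem_union, Finset.mem_filter, Finset.mem_univ, true_and]
      tauto
    have hcne : (Finset.univ.filter (fun j : Fin (2*d) => j ≠ i)).card = 2*d - 1 := by
      rw [Finset.filter_ne', Finset.card_erase_of_mem (Finset.mem_univ i), Finset.card_univ,
        hcard2d]
    have := Finset.card_union_of_disjoint hdisj
    rw [hunion, hcne] at this
    have hd1 : 1 ≤ d := by omega
    omega
  have hJd : d ≤ J.card := by omega
  obtain ⟨J0, hJ0sub, hJ0card⟩ := Finset.exists_subset_card_eq hJd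
  obtain ⟨S, z, c, hSsub, hzF, hcpos, hsum, hind⟩ :=
    colorful J0 F (by rw [hdim, hJ0card]) (fun j _ => hFspan j) (-x)
  have hSJ : ∀ j ∈ S, j ∈ J := fun j hj => hJ0sub (hSsub hj)
  have hSne_i : ∀ j ∈ S, j ≠ i := fun j hj => (Finset.mem_filter.mp (hSJ j hj)).2.1
  have hiS : i ∉ S := fun h => (hSne_i i h) rfl
  have hnormx : ‖x‖ = 1 := by
    have := hXs i hx; rwa [mem_sphere_zero_iff_norm] at this
  have hx0 : x ≠ 0 := by
    intro h; rw [h, norm_zero] at hnormx; exact one_ne_zero hnormx.symm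
  have hS2 : 2 ≤ S.card := by
    by_contra hlt
    push_neg at hlt
    have hc01 : S.card = 0 ∨ S.card = 1 := by omega
    rcases hc01 with h0 | h1
    · have hSe : S = ∅ := Finset.card_eq_zero.mp h0
      rw [hSe, Finset.sum_empty] at hsum
      exact hx0 (by rw [← neg_neg x, hsum, neg_zero])
    · obtain ⟨j0, hj0⟩ := Finset.card_eq_one.mp h1
      have hj0S : j0 ∈ S := by rw [hj0]; exact Finset.mem_singleton_self j0
      rw [hj0, Finset.sum_singleton] at hsum
      have hzX : z j0 ∈ X j0 := hFsub j0 (hzF j0 hj0S)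
      have hnz : ‖z j0‖ = 1 := by
        have := hXs j0 hzX; rwa [mem_sphere_zero_iff_norm] at this
      have hcpos0 : 0 < c j0 := hcpos j0 hj0S
      have hc1 : c j0 = 1 := by
        have hnn : ‖-x‖ = ‖c j0 • z j0‖ := by rw [hsum]
        rw [norm_neg, hnormx, norm_smul, Real.norm_eq_abs, abs_of_pos hcpos0, hnz, mul_one] at hnn
        exact hnn.symm
      have hzeq : z j0 = -x := by rw [hsum, hc1, one_smul]
      have hnot : -x ∉ X j0 := (Finset.mem_filter.mp (hSJ j0 hj0S)).2.2
      exact hnot (hzeq ▸ hzX)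
  -- initial state
  set t0 : Fin (2*d) → EuclideanSpace ℝ (Fin d) := fun j => if j = i then x else z j with ht0
  set I0 : Finset (Fin (2*d)) := insert i S with hI0
  set L0 : Submodule ℝ (EuclideanSpace ℝ (Fin d)) := span ℝ (insert x (z '' ↑S)) with hL0
  have ht0mem : ∀ j ∈ I0, t0 j ∈ X j := by
    intro j hj
    rcases Finset.mem_insert.mp hj with rfl | hjS
    · simp only [ht0, if_pos rfl]; exact hx
    · simp only [ht0, if_neg (hSne_i j hjS)]; exact hFsub j (hzF j hjS)
  have hxC0 : x ∈ span R0 (t0 '' ↑I0) := by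
    apply Submodule.subset_span
    exact ⟨i, Finset.mem_insert_self i S, by simp only [ht0, if_pos rfl]⟩
  have hzC0 : ∀ j ∈ S, z j ∈ span R0 (t0 '' ↑I0) := by
    intro j hj
    apply Submodule.subset_span
    exact ⟨j, Finset.mem_insert_of_mem hj, by simp only [ht0, if_neg (hSne_i j hj)]⟩
  have hnegxC0 : -x ∈ span R0 (t0 '' ↑I0) := by
    rw [hsum]
    apply Submodule.sum_mem
    intro j hj
    have h1 : c j • z j = (⟨c j, le_of_lt (hcpos j hj)⟩ : R0) • z j := rfl
    rw [h1]
    exact Submodule.smul_mem _ _ (hzC0 j hj)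
  have hnegzC0 : ∀ k ∈ S, -(z k) ∈ span R0 (t0 '' ↑I0) := by
    intro k hk
    have hsplit : ∑ j ∈ S, c j • z j = c k • z k + ∑ j ∈ S.erase k, c j • z j :=
      (Finset.add_sum_erase S (fun j => c j • z j) hk).symm
    have h7 : x + ∑ j ∈ S.erase k, c j • z j = -(c k • z k) := by
      have h8 : -x = c k • z k + ∑ j ∈ S.erase k, c j • z j := by rw [hsum, hsplit]
      have h9 : x = -(c k • z k + ∑ j ∈ S.erase k, c j • z j) := by rw [← h8, neg_neg]
      rw [h9]; abel
    have h6 : -(z k) = (c k)⁻¹ • (x + ∑ j ∈ S.erase k, c j • z j) := by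
      rw [h7, smul_neg, smul_smul, inv_mul_cancel₀ (ne_of_gt (hcpos k hk)), one_smul]
    rw [h6]
    have hmm : (x + ∑ j ∈ S.erase k, c j • z j) ∈ span R0 (t0 '' ↑I0) := by
      apply Submodule.add_mem _ hxC0
      apply Submodule.sum_mem
      intro j hj
      have hjS : j ∈ S := Finset.mem_of_mem_erase hj
      have h1 : c j • z j = (⟨c j, le_of_lt (hcpos j hjS)⟩ : R0) • z j := rfl
      rw [h1]
      exact Submodule.smul_mem _ _ (hzC0 j hjS)
    have h2 : (c k)⁻¹ • (x + ∑ j ∈ S.erase k, c j • z j)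
        = (⟨(c k)⁻¹, inv_nonneg.mpr (le_of_lt (hcpos k hk))⟩ : R0)
          • (x + ∑ j ∈ S.erase k, c j • z j) := rfl
    rw [h2]
    exact Submodule.smul_mem _ _ hmm
  have hL0C : (L0 : Set (EuclideanSpace ℝ (Fin d)))
      ⊆ (span R0 (t0 '' ↑I0) : Set (EuclideanSpace ℝ (Fin d))) := by
    apply span_le_of_neg
    intro s hs
    rcases Set.mem_insert_iff.mp hs with rfl | ⟨j, hj, rfl⟩
    · exact ⟨hxC0, hnegxC0⟩
    · exact ⟨hzC0 j hj, hnegzC0 j hj⟩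
  have hrange : Set.range (fun j : {j // j ∈ S} => z j.1) = z '' ↑S := by
    ext y
    constructor
    · rintro ⟨⟨j, hj⟩, rfl⟩; exact ⟨j, hj, rfl⟩
    · rintro ⟨j, hj, rfl⟩; exact ⟨⟨j, hj⟩, rfl⟩
  have hfrS : finrank ℝ (span ℝ (z '' ↑S) : Submodule ℝ (EuclideanSpace ℝ (Fin d))) = S.card := by
    rw [← hrange, finrank_span_eq_card hind, Fintype.card_coe]
  have hrank0 : S.card ≤ finrank ℝ L0 := by
    rw [← hfrS]
    exact Submodule.finrank_mono (Submodule.span_mono (Set.subset_insert _ _))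
  have hcardI0 : I0.card = S.card + 1 := by
    rw [hI0, Finset.card_insert_of_notMem hiS]
  -- finishing move
  have finish : ∀ (I : Finset (Fin (2*d))) (t : Fin (2*d) → EuclideanSpace ℝ (Fin d))
      (L : Submodule ℝ (EuclideanSpace ℝ (Fin d))),
      (∀ j ∈ I, t j ∈ X j) →
      ((L : Set (EuclideanSpace ℝ (Fin d)))
        ⊆ (span R0 (t '' ↑I) : Set (EuclideanSpace ℝ (Fin d)))) →
      (I.card + 1 ≤ 2 * finrank ℝ L) → (d ≤ finrank ℝ L) → False := by
    intro I t L hmem hLC hcardI hdle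
    have hrkle : finrank ℝ L ≤ d := by
      have := Submodule.finrank_le L
      rwa [hdim] at this
    have hLtop : L = ⊤ := Submodule.eq_top_of_finrank_eq (by rw [hdim]; omega)
    have hspan : span R0 (t '' ↑I) = ⊤ := by
      apply Submodule.eq_top_iff'.mpr
      intro v
      apply hLC
      rw [hLtop]
      trivial
    have hIne : I ≠ Finset.univ := by
      intro h
      rw [h, Finset.card_univ, hcard2d] at hcardI
      omega
    apply hno I hIne t hmem
    rw [posHull_eq_span, hspan]
    rfl
  -- the growth loop
  have loop : ∀ (m : ℕ) (I : Finset (Fin (2*d))) (t : Fin (2*d) → EuclideanSpace ℝ (Fin d))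
      (L : Submodule ℝ (EuclideanSpace ℝ (Fin d))),
      (∀ j ∈ I, t j ∈ X j) →
      ((L : Set (EuclideanSpace ℝ (Fin d)))
        ⊆ (span R0 (t '' ↑I) : Set (EuclideanSpace ℝ (Fin d)))) →
      (I.card + 1 ≤ 2 * finrank ℝ L) → (d ≤ finrank ℝ L + m) → False := by
    intro m
    induction m with
    | zero =>
      intro I t L h1 h2 h3 h4
      exact finish I t L h1 h2 h3 (by omega)
    | succ m ih =>
      intro I t L hmem hLC hcardI hdle
      by_cases hD : d ≤ finrank ℝ L
      · exact finish I t L hmem hLC hcardI hD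
      push_neg at hD
      -- pick an unused index l
      have hcompl : 0 < (Finset.univ \ I).card := by
        rw [Finset.card_sdiff_of_subset (Finset.subset_univ I), Finset.card_univ, hcard2d]
        omega
      obtain ⟨l, hl⟩ := Finset.card_pos.mp hcompl
      have hlI : l ∉ I := (Finset.mem_sdiff.mp hl).2
      -- a point of F l outside L
      have hFlnotsub : ¬ ((F l : Set (EuclideanSpace ℝ (Fin d)))
          ⊆ (L : Set (EuclideanSpace ℝ (Fin d)))) := by
        intro hsub
        have hsp : span ℝ (F l : Set (EuclideanSpace ℝ (Fin d))) ≤ L := Submodule.span_le.mpr hsub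
        rw [spanR_of_spanR0 (hFspan l)] at hsp
        have hLtop : L = ⊤ := top_le_iff.mp hsp
        rw [hLtop, finrank_top, hdim] at hD
        exact lt_irrefl d hD
      obtain ⟨y, hyF, hyL⟩ := Set.not_subset.mp hFlnotsub
      have hπy : orthogonalProjection Lᗮ y ≠ 0 := by
        intro h0
        apply hyL
        have h1 : y ∈ Lᗮᗮ := Submodule.orthogonalProjectionOnto_eq_zero_iff.mp h0
        rwa [Submodule.orthogonal_orthogonal] at h1
      have hrkK : finrank ℝ L + finrank ℝ ↥Lᗮ = d := by
        have := Submodule.finrank_add_finrank_orthogonal (K := L)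
        rwa [hdim] at this
      set Q : Finset (Fin (2*d)) := (Finset.univ \ I).erase l with hQ
      have hQcard : finrank ℝ ↥Lᗮ ≤ Q.card := by
        rw [hQ, Finset.card_erase_of_mem hl, Finset.card_sdiff_of_subset (Finset.subset_univ I),
          Finset.card_univ, hcard2d]
        omega
      have hπsurj : Function.Surjective ((orthogonalProjection Lᗮ).toLinearMap) := by
        intro v
        exact ⟨(v : EuclideanSpace ℝ (Fin d)), orthogonalProjection_mem_subspace_eq_self v⟩
      have hA'span : ∀ j ∈ Q, span R0 (((F j).image (orthogonalProjection Lᗮ) : Finset ↥Lᗮ)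
          : Set ↥Lᗮ) = ⊤ := by
        intro j _
        rw [Finset.coe_image]
        exact span_image_R0_top ((orthogonalProjection Lᗮ).toLinearMap) hπsurj (hFspan j)
      obtain ⟨S', z', c', hS'Q, hz'A, hc'pos, hsum', hind'⟩ :=
        colorful Q (fun j => (F j).image (orthogonalProjection Lᗮ)) hQcard hA'span
          (-(orthogonalProjection Lᗮ y))
      have hpre : ∀ j ∈ S', ∃ a, a ∈ F j ∧ orthogonalProjection Lᗮ a = z' j := by
        intro j hj
        have h1 := hz'A j hj
        rw [Finset.mem_image] at h1
        obtain ⟨a, ha, hav⟩ := h1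
        exact ⟨a, ha, hav⟩
      choose! w hwF hwπ using hpre
      have hS'ne : S'.Nonempty := by
        rcases Finset.eq_empty_or_nonempty S' with rfl | h
        · rw [Finset.sum_empty] at hsum'
          exact absurd (neg_eq_zero.mp hsum') hπy
        · exact h
      have hS'I : ∀ j ∈ S', j ∉ I :=
        fun j hj => (Finset.mem_sdiff.mp (Finset.mem_of_mem_erase (hS'Q hj))).2
      have hS'l : ∀ j ∈ S', j ≠ l := fun j hj => Finset.ne_of_mem_erase (hS'Q hj)
      have hlS' : l ∉ S' := fun h => (hS'l l h) rfl
      set t' : Fin (2*d) → EuclideanSpace ℝ (Fin d) :=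
        fun j => if j = l then y else if j ∈ S' then w j else t j with ht'
      set I' : Finset (Fin (2*d)) := insert l (I ∪ S') with hI'
      have hmem' : ∀ j ∈ I', t' j ∈ X j := by
        intro j hj
        rcases Finset.mem_insert.mp hj with rfl | hj2
        · simp only [ht', if_pos rfl]; exact hFsub j hyF
        · rcases Finset.mem_union.mp hj2 with hjI | hjS
          · have hjl : j ≠ l := by rintro rfl; exact hlI hjI
            have hjS' : j ∉ S' := fun h => hS'I j h hjI
            simp only [ht', if_neg hjl, if_neg hjS']
            exact hmem j hjI
          · have hjl : j ≠ l := hS'l j hjS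
            simp only [ht', if_neg hjl, if_pos hjS]
            exact hFsub j (hwF j hjS)
      have himgsub : t '' ↑I ⊆ t' '' ↑I' := by
        rintro _ ⟨j, hj, rfl⟩
        have hjI : j ∈ I := hj
        have hjl : j ≠ l := by rintro rfl; exact hlI hjI
        have hjS' : j ∉ S' := fun h => hS'I j h hjI
        refine ⟨j, ?_, ?_⟩
        · exact Finset.mem_insert_of_mem (Finset.mem_union_left _ hjI)
        · simp only [ht', if_neg hjl, if_neg hjS']
      have hLC' : (L : Set (EuclideanSpace ℝ (Fin d)))
          ⊆ (span R0 (t' '' ↑I') : Set (EuclideanSpace ℝ (Fin d))) := by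
        intro v hv
        exact Submodule.span_mono himgsub (hLC hv)
      have hyC' : y ∈ span R0 (t' '' ↑I') := by
        apply Submodule.subset_span
        exact ⟨l, Finset.mem_insert_self l _, by simp only [ht', if_pos rfl]⟩
      have hwC' : ∀ j ∈ S', w j ∈ span R0 (t' '' ↑I') := by
        intro j hj
        apply Submodule.subset_span
        refine ⟨j, Finset.mem_insert_of_mem (Finset.mem_union_right _ hj), ?_⟩
        simp only [ht', if_neg (hS'l j hj), if_pos hj]
      set w0 : EuclideanSpace ℝ (Fin d) := y + ∑ j ∈ S', c' j • w j with hw0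
      have hπw0 : orthogonalProjection Lᗮ w0 = 0 := by
        rw [hw0, map_add, map_sum]
        have h1 : ∀ j ∈ S', orthogonalProjection Lᗮ (c' j • w j) = c' j • z' j := by
          intro j hj
          rw [map_smul, hwπ j hj]
        rw [Finset.sum_congr rfl h1, ← hsum']
        simp
      have hw0L : w0 ∈ L := by
        have h1 : w0 ∈ Lᗮᗮ := Submodule.orthogonalProjectionOnto_eq_zero_iff.mp hπw0
        rwa [Submodule.orthogonal_orthogonal] at h1
      have hnegyC' : -y ∈ span R0 (t' '' ↑I') := by
        have h5 : -y = (∑ j ∈ S', c' j • w j) + -w0 := by rw [hw0]; abel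
        rw [h5]
        apply Submodule.add_mem
        · apply Submodule.sum_mem
          intro j hj
          have h1 : c' j • w j = (⟨c' j, le_of_lt (hc'pos j hj)⟩ : R0) • w j := rfl
          rw [h1]
          exact Submodule.smul_mem _ _ (hwC' j hj)
        · exact hLC' (L.neg_mem hw0L)
      have hnegwC' : ∀ k ∈ S', -(w k) ∈ span R0 (t' '' ↑I') := by
        intro k hk
        have hsplit : ∑ j ∈ S', c' j • w j = c' k • w k + ∑ j ∈ S'.erase k, c' j • w j :=
          (Finset.add_sum_erase S' (fun j => c' j • w j) hk).symm
        have h7 : y + ∑ j ∈ S'.erase k, c' j • w j + -w0 = -(c' k • w k) := by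
          rw [hw0, hsplit]; abel
        have h6 : -(w k) = (c' k)⁻¹ • (y + ∑ j ∈ S'.erase k, c' j • w j + -w0) := by
          rw [h7, smul_neg, smul_smul, inv_mul_cancel₀ (ne_of_gt (hc'pos k hk)), one_smul]
        rw [h6]
        have hmm : (y + ∑ j ∈ S'.erase k, c' j • w j + -w0) ∈ span R0 (t' '' ↑I') := by
          apply Submodule.add_mem
          · apply Submodule.add_mem _ hyC'
            apply Submodule.sum_mem
            intro j hj
            have hjS' : j ∈ S' := Finset.mem_of_mem_erase hj
            have h1 : c' j • w j = (⟨c' j, le_of_lt (hc'pos j hjS')⟩ : R0) • w j := rfl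
            rw [h1]
            exact Submodule.smul_mem _ _ (hwC' j hjS')
          · exact hLC' (L.neg_mem hw0L)
        have h2 : (c' k)⁻¹ • (y + ∑ j ∈ S'.erase k, c' j • w j + -w0)
            = (⟨(c' k)⁻¹, inv_nonneg.mpr (le_of_lt (hc'pos k hk))⟩ : R0)
              • (y + ∑ j ∈ S'.erase k, c' j • w j + -w0) := rfl
        rw [h2]
        exact Submodule.smul_mem _ _ hmm
      set L' : Submodule ℝ (EuclideanSpace ℝ (Fin d)) := L ⊔ span ℝ (w '' ↑S') with hL'
      have hL'C : (L' : Set (EuclideanSpace ℝ (Fin d)))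
          ⊆ (span R0 (t' '' ↑I') : Set (EuclideanSpace ℝ (Fin d))) := by
        have hall : ∀ s ∈ ((L : Set (EuclideanSpace ℝ (Fin d))) ∪ (insert y (w '' ↑S'))),
            s ∈ span R0 (t' '' ↑I') ∧ -s ∈ span R0 (t' '' ↑I') := by
          rintro s hs
          rcases hs with hsL | hs2
          · exact ⟨hLC' hsL, hLC' (L.neg_mem hsL)⟩
          · rcases Set.mem_insert_iff.mp hs2 with rfl | ⟨j, hj, rfl⟩
            · exact ⟨hyC', hnegyC'⟩
            · exact ⟨hwC' j hj, hnegwC' j hj⟩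
        have hsub2 : L' ≤ span ℝ ((L : Set (EuclideanSpace ℝ (Fin d))) ∪ (insert y (w '' ↑S'))) := by
          rw [hL']
          apply sup_le
          · intro v hv
            exact Submodule.subset_span (Or.inl hv)
          · apply Submodule.span_mono
            intro v hv
            exact Or.inr (Set.mem_insert_of_mem _ hv)
        exact fun v hv => span_le_of_neg _ _ hall (hsub2 hv)
      have hind2 : LinearIndependent ℝ
          (fun j : {j // j ∈ S'} => (orthogonalProjection Lᗮ (w j.1) : ↥Lᗮ)) := by
        have heqf : (fun j : {j // j ∈ S'} => (orthogonalProjection Lᗮ (w j.1) : ↥Lᗮ))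
            = (fun j : {j // j ∈ S'} => z' j.1) := by
          funext j
          exact hwπ j.1 j.2
        rw [heqf]
        exact hind'
      have hrkL' := rank_grow L S' w hind2
      rw [← hL'] at hrkL'
      have hcardI' : I'.card ≤ I.card + S'.card + 1 := by
        rw [hI']
        calc (insert l (I ∪ S')).card ≤ (I ∪ S').card + 1 := Finset.card_insert_le _ _
          _ ≤ I.card + S'.card + 1 := by
              have := Finset.card_union_le I S'
              omega
      have hS'1 : 1 ≤ S'.card := Finset.card_pos.mpr hS'ne
      exact ih I' t' L' hmem' hL'C (by omega) (by omega)
  exact loop d I0 t0 L0 ht0mem hL0C (by omega) (by omega)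
end

section
/- Let x₁, …, x_d ∈ ℝ^d be linearly independent and let v lie in the interior of the cone C = pos {x₁,…,x_d}. If y₁, …, y_d ∈ ℝ^d satisfy −v ∈ int pos {y₁,…,y_d}, then pos {x₁,…,x_d,y₁,…,y_d} = ℝ^d. -/
open scoped BigOperators

lemma posHull_mono {d : ℕ} {A B : Set (EuclideanSpace ℝ (Fin d))} (h : A ⊆ B) :
    posHull A ⊆ posHull B := by
  rintro z ⟨n, c, f, hc, hf, rfl⟩
  exact ⟨n, c, f, hc, fun i => h (hf i), rfl⟩

lemma posHull_add {d : ℕ} {A : Set (EuclideanSpace ℝ (Fin d))}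
    {a b : EuclideanSpace ℝ (Fin d)} (ha : a ∈ posHull A) (hb : b ∈ posHull A) :
    a + b ∈ posHull A := by
  obtain ⟨n, c, f, hc, hf, rfl⟩ := ha
  obtain ⟨m, c', f', hc', hf', rfl⟩ := hb
  refine ⟨n + m, Fin.append c c', Fin.append f f', ?_, ?_, ?_⟩
  · intro i
    refine Fin.addCases (fun j => ?_) (fun j => ?_) i
    · simpa [Fin.append_left] using hc j
    · simpa [Fin.append_right] using hc' j
  · intro i
    refine Fin.addCases (fun j => ?_) (fun j => ?_) i
    · simpa [Fin.append_left] using hf j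
    · simpa [Fin.append_right] using hf' j
  · rw [Fin.sum_univ_add]
    simp [Fin.append_left, Fin.append_right]

lemma posHull_smul {d : ℕ} {A : Set (EuclideanSpace ℝ (Fin d))}
    {a : EuclideanSpace ℝ (Fin d)} {t : ℝ} (ht : 0 ≤ t) (ha : a ∈ posHull A) :
    t • a ∈ posHull A := by
  obtain ⟨n, c, f, hc, hf, rfl⟩ := ha
  refine ⟨n, fun i => t * c i, f, fun i => mul_nonneg ht (hc i), hf, ?_⟩
  rw [Finset.smul_sum]
  simp [smul_smul]

theorem two_cones_span (d : ℕ) (x y : Fin d → EuclideanSpace ℝ (Fin d))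
    (hx : LinearIndependent ℝ x) (v : EuclideanSpace ℝ (Fin d))
    (hv : v ∈ interior (posHull (Set.range x)))
    (hw : -v ∈ interior (posHull (Set.range y))) :
    posHull (Set.range x ∪ Set.range y) = Set.univ := by
  ext z
  simp only [Set.mem_univ, iff_true]
  rw [mem_interior_iff_mem_nhds, Metric.mem_nhds_iff] at hv
  obtain ⟨ε, hε, hball⟩ := hv
  set δ : ℝ := ε / (2 * (‖z‖ + 1)) with hδdef
  have hz1 : (0:ℝ) < ‖z‖ + 1 := by positivity
  have hδ : 0 < δ := by positivity
  have hmem : v + δ • z ∈ posHull (Set.range x) := by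
    apply hball
    rw [Metric.mem_ball, dist_eq_norm]
    have : v + δ • z - v = δ • z := by abel
    rw [this, norm_smul, Real.norm_eq_abs, abs_of_pos hδ]
    calc δ * ‖z‖ ≤ δ * (‖z‖ + 1) := by
          apply mul_le_mul_of_nonneg_left (by linarith) hδ.le
      _ = ε / 2 := by
          field_simp [hδdef]
          have h2 : δ * (2 * (‖z‖ + 1)) = ε := by
            rw [hδdef]; exact div_mul_cancel₀ ε (by positivity)
          linear_combination h2
      _ < ε := by linarith
  have hvy : -v ∈ posHull (Set.range y) := interior_subset hw
  have key : z = δ⁻¹ • (v + δ • z) + δ⁻¹ • (-v) := by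
    rw [smul_add, smul_smul, inv_mul_cancel₀ hδ.ne', one_smul, smul_neg]
    abel
  rw [key]
  exact posHull_add
    (posHull_mono Set.subset_union_left (posHull_smul (inv_nonneg.mpr hδ.le) hmem))
    (posHull_mono Set.subset_union_right (posHull_smul (inv_nonneg.mpr hδ.le) hvy))
end
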